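/- Let α > 0 and q > 1, and let k^α(n) = Γ(n+α)/(Γ(α)Γ(n+1)). There exists a constant C depending only on α and q such that for all integers j > n ≥ 0, ∑_{l=n+1}^∞ (k^α(l-n+j)/k^{α+1}(l))^q ≤ C · j · (k^α(j)/k^{α+1}(n))^q. -/

import Mathlib

/-- The Cesàro kernel of real order. -/
noncomputable def cesK (α : ℝ) (n : ℕ) : ℝ :=
  Real.Gamma (n + α) / (Real.Gamma α * Real.Gamma (n + 1))

open Real Finset

namespace Stmt7Aux

lemma cesK_pos {α : ℝ} (hα : 0 < α) (n : ℕ) : 0 < cesK α n := by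
  have h1 : (0:ℝ) < (n:ℝ) + α := by positivity
  have h2 : (0:ℝ) < (n:ℝ) + 1 := by positivity
  exact div_pos (Real.Gamma_pos_of_pos h1)
    (mul_pos (Real.Gamma_pos_of_pos hα) (Real.Gamma_pos_of_pos h2))

lemma cesK_succ {α : ℝ} (hα : 0 < α) (k : ℕ) :
    cesK α (k+1) = cesK α k * (((k:ℝ) + α) / ((k:ℝ) + 1)) := by
  unfold cesK
  have hk : (0:ℝ) < (k:ℝ) + α := by positivity
  have hk1 : (0:ℝ) < (k:ℝ) + 1 := by positivity
  have h1 : (((k+1:ℕ)):ℝ) + α = ((k:ℝ) + α) + 1 := by push_cast; ring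
  have h2 : (((k+1:ℕ)):ℝ) + 1 = ((k:ℝ) + 1) + 1 := by push_cast; ring
  rw [h1, h2, Real.Gamma_add_one hk.ne', Real.Gamma_add_one hk1.ne']
  have hΓα : Real.Gamma α ≠ 0 := (Real.Gamma_pos_of_pos hα).ne'
  have hΓk : Real.Gamma ((k:ℝ)+1) ≠ 0 := (Real.Gamma_pos_of_pos hk1).ne'
  field_simp

/-- the quotient sequence -/
noncomputable def gq (α : ℝ) (n j m : ℕ) : ℝ := cesK α (j+m) / cesK (α+1) (n+m)

lemma gq_pos {α : ℝ} (hα : 0 < α) (n j m : ℕ) : 0 < gq α n j m :=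
  div_pos (cesK_pos hα _) (cesK_pos (by linarith) _)

lemma gq_succ {α : ℝ} (hα : 0 < α) (n j m : ℕ) :
    gq α n j (m+1) = gq α n j m *
      ((((j:ℝ)+m+α)/((j:ℝ)+m+1)) * (((n:ℝ)+m+1)/((n:ℝ)+m+1+α))) := by
  have hj : j + (m+1) = (j+m) + 1 := rfl
  have hn : n + (m+1) = (n+m) + 1 := rfl
  unfold gq
  rw [hj, hn, cesK_succ hα, cesK_succ (by linarith : (0:ℝ) < α+1)]
  have c1 : (((j+m:ℕ)):ℝ) = (j:ℝ) + m := by push_cast; ring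
  have c2 : (((n+m:ℕ)):ℝ) = (n:ℝ) + m := by push_cast; ring
  rw [c1, c2]
  have hm0 : (0:ℝ) ≤ (m:ℝ) := Nat.cast_nonneg m
  have hn0 : (0:ℝ) ≤ (n:ℝ) := Nat.cast_nonneg n
  have hj0 : (0:ℝ) ≤ (j:ℝ) := Nat.cast_nonneg j
  have h1 : cesK (α+1) (n+m) ≠ 0 := (cesK_pos (by linarith) _).ne'
  have h2 : ((n:ℝ)+m+(α+1)) ≠ 0 := by positivity
  have h3 : ((n:ℝ)+m+1) ≠ 0 := by positivity
  have h4 : ((j:ℝ)+m+1) ≠ 0 := by positivity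
  have h5 : ((n:ℝ)+m+1+α) ≠ 0 := by positivity
  field_simp
  ring

lemma gq_le_head {α : ℝ} (hα : 0 < α) {n j : ℕ} (hnj : n ≤ j) (m : ℕ) :
    gq α n j m ≤ gq α n j 0 := by
  induction m with
  | zero => exact le_refl _
  | succ m ih =>
    have hg := gq_pos hα n j m
    have hcast : (n:ℝ) ≤ (j:ℝ) := Nat.cast_le.2 hnj
    have hm0 : (0:ℝ) ≤ (m:ℝ) := Nat.cast_nonneg m
    have hn0 : (0:ℝ) ≤ (n:ℝ) := Nat.cast_nonneg n
    have hfac : (((j:ℝ)+m+α)/((j:ℝ)+m+1)) * (((n:ℝ)+m+1)/((n:ℝ)+m+1+α)) ≤ 1 := by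
      rw [div_mul_div_comm, div_le_one (by positivity)]
      nlinarith [mul_nonneg hα.le (sub_nonneg.2 hcast)]
    have hfac0 : (0:ℝ) ≤ (((j:ℝ)+m+α)/((j:ℝ)+m+1)) * (((n:ℝ)+m+1)/((n:ℝ)+m+1+α)) := by
      positivity
    calc gq α n j (m+1) = gq α n j m *
          ((((j:ℝ)+m+α)/((j:ℝ)+m+1)) * (((n:ℝ)+m+1)/((n:ℝ)+m+1+α))) := gq_succ hα n j m
      _ ≤ gq α n j m * 1 := mul_le_mul_of_nonneg_left hfac hg.le
      _ = gq α n j m := mul_one _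
      _ ≤ gq α n j 0 := ih

lemma lem_up {c X : ℝ} (hc : 0 ≤ c) (hX : 1 < X) : 1 + c / X ≤ (X/(X-1)) ^ c := by
  have hX0 : (0:ℝ) < X := by linarith
  have hX1 : (0:ℝ) < X - 1 := by linarith
  have e1 : (X-1)/X - 1 = -(1/X) := by field_simp; ring
  have h := Real.log_le_sub_one_of_pos (div_pos hX1 hX0)
  rw [e1] at h
  have hinv : Real.log (X / (X-1)) = - Real.log ((X-1)/X) := by
    rw [← Real.log_inv ((X-1)/X), inv_div]
  have hlog : 1/X ≤ Real.log (X/(X-1)) := by rw [hinv]; linarith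
  calc 1 + c / X ≤ Real.exp (c / X) := by
        have := Real.add_one_le_exp (c / X); linarith
    _ ≤ Real.exp (c * Real.log (X/(X-1))) := by
        apply Real.exp_le_exp.2
        calc c / X = c * (1/X) := by ring
          _ ≤ c * Real.log (X/(X-1)) := mul_le_mul_of_nonneg_left hlog hc
    _ = (X/(X-1)) ^ c := by
        rw [Real.rpow_def_of_pos (div_pos hX0 hX1), mul_comm]

lemma lem_down {c X : ℝ} (hc : 0 ≤ c) (hX : 0 < X) : 1 - c / X ≤ (X/(X+1)) ^ c := by
  have hX1 : (0:ℝ) < X + 1 := by linarith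
  have e1 : (X+1)/X - 1 = 1/X := by field_simp; ring
  have h := Real.log_le_sub_one_of_pos (div_pos hX1 hX)
  rw [e1] at h
  have hinv : Real.log (X / (X+1)) = - Real.log ((X+1)/X) := by
    rw [← Real.log_inv ((X+1)/X), inv_div]
  have hlog : -(1/X) ≤ Real.log (X/(X+1)) := by rw [hinv]; linarith
  calc 1 - c / X ≤ Real.exp (-(c/X)) := by
        have := Real.add_one_le_exp (-(c/X)); linarith
    _ ≤ Real.exp (c * Real.log (X/(X+1))) := by
        apply Real.exp_le_exp.2
        calc -(c/X) = c * (-(1/X)) := by ring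
          _ ≤ c * Real.log (X/(X+1)) := mul_le_mul_of_nonneg_left hlog hc
    _ = (X/(X+1)) ^ c := by
        rw [Real.rpow_def_of_pos (div_pos hX hX1), mul_comm]


lemma decay_ge {α : ℝ} (hα : 0 < α) (hα1 : 1 ≤ α) {n j : ℕ} (hj : 0 < j) (m : ℕ) :
    gq α n j m ≤ gq α n j 0 * (((j:ℝ)+m)/(j:ℝ)) ^ (α-1) *
      (((n:ℝ)+1+α)/((n:ℝ)+m+1+α)) ^ α := by
  have hj0 : (0:ℝ) < (j:ℝ) := by exact_mod_cast hj
  have hn0 : (0:ℝ) ≤ (n:ℝ) := Nat.cast_nonneg n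
  induction m with
  | zero =>
    simp only [Nat.cast_zero, add_zero]
    rw [div_self hj0.ne', Real.one_rpow, mul_one]
    rw [div_self (by positivity : ((n:ℝ)+1+α) ≠ 0), Real.one_rpow, mul_one]
  | succ m ih =>
    have hm0 : (0:ℝ) ≤ (m:ℝ) := Nat.cast_nonneg m
    have cm : (((m+1:ℕ)):ℝ) = (m:ℝ)+1 := by push_cast; ring
    rw [cm, show (j:ℝ)+((m:ℝ)+1) = (j:ℝ)+(m:ℝ)+1 from by ring,
      show (n:ℝ)+((m:ℝ)+1)+1+α = (n:ℝ)+(m:ℝ)+2+α from by ring]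
    set a := (j:ℝ); set b := (n:ℝ); set x := (m:ℝ)
    have ha1 : 1 ≤ a := by simp only [a]; exact_mod_cast hj
    have key1 : ((a+x+α)/(a+x+1)) ≤ ((a+x+1)/(a+x))^(α-1) := by
      have hX : 1 < a+x+1 := by linarith
      have h := lem_up (sub_nonneg.2 hα1) hX
      rw [show a+x+1-1 = a+x from by ring] at h
      have e : (a+x+α)/(a+x+1) = 1 + (α-1)/(a+x+1) := by
        field_simp
        ring
      rw [e]; exact h
    have key2 : ((b+x+1)/(b+x+1+α)) ≤ ((b+x+1+α)/(b+x+2+α))^α := by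
      have hX : (0:ℝ) < b+x+1+α := by linarith
      have h := lem_down hα.le hX
      rw [show b+x+1+α+1 = b+x+2+α from by ring] at h
      have e : (b+x+1)/(b+x+1+α) = 1 - α/(b+x+1+α) := by
        field_simp
        ring
      rw [e]; exact h
    have hP : ((a+x)/a)^(α-1) * ((a+x+1)/(a+x))^(α-1) = ((a+x+1)/a)^(α-1) := by
      rw [← Real.mul_rpow (by positivity) (by positivity)]
      congr 1
      field_simp
    have hQ : ((b+1+α)/(b+x+1+α))^α * ((b+x+1+α)/(b+x+2+α))^α
        = ((b+1+α)/(b+x+2+α))^α := by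
      rw [← Real.mul_rpow (by positivity) (by positivity)]
      congr 1
      rw [div_mul_div_comm]
      rw [mul_comm (b+1+α) (b+x+1+α), mul_div_mul_left _ _ (by positivity : (b+x+1+α) ≠ 0)]
    have hg0 := gq_pos hα n j 0
    calc gq α n j (m+1)
        = gq α n j m * (((a+x+α)/(a+x+1)) * ((b+x+1)/(b+x+1+α))) := gq_succ hα n j m
      _ ≤ (gq α n j 0 * ((a+x)/a)^(α-1) * ((b+1+α)/(b+x+1+α))^α) *
            (((a+x+α)/(a+x+1)) * ((b+x+1)/(b+x+1+α))) := by
          apply mul_le_mul_of_nonneg_right ih (by positivity)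
      _ ≤ (gq α n j 0 * ((a+x)/a)^(α-1) * ((b+1+α)/(b+x+1+α))^α) *
            (((a+x+1)/(a+x))^(α-1) * ((b+x+1+α)/(b+x+2+α))^α) := by
          apply mul_le_mul_of_nonneg_left _ (by positivity)
          exact mul_le_mul key1 key2 (by positivity) (by positivity)
      _ = gq α n j 0 * (((a+x)/a)^(α-1) * ((a+x+1)/(a+x))^(α-1)) *
            (((b+1+α)/(b+x+1+α))^α * ((b+x+1+α)/(b+x+2+α))^α) := by ring
      _ = gq α n j 0 * ((a+x+1)/a)^(α-1) * ((b+1+α)/(b+x+2+α))^α := by rw [hP, hQ]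

lemma decay_lt {α : ℝ} (hα : 0 < α) (hα1 : α < 1) {n j : ℕ} (hj : 0 < j) (m : ℕ) :
    gq α n j m ≤ gq α n j 0 * (((j:ℝ)+1)/((j:ℝ)+m+1)) ^ (1-α) *
      (((n:ℝ)+1+α)/((n:ℝ)+m+1+α)) ^ α := by
  have hj0 : (0:ℝ) < (j:ℝ) := by exact_mod_cast hj
  have hn0 : (0:ℝ) ≤ (n:ℝ) := Nat.cast_nonneg n
  induction m with
  | zero =>
    simp only [Nat.cast_zero, add_zero]
    rw [div_self (by positivity : ((j:ℝ)+1) ≠ 0), Real.one_rpow, mul_one]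
    rw [div_self (by positivity : ((n:ℝ)+1+α) ≠ 0), Real.one_rpow, mul_one]
  | succ m ih =>
    have hm0 : (0:ℝ) ≤ (m:ℝ) := Nat.cast_nonneg m
    have cm : (((m+1:ℕ)):ℝ) = (m:ℝ)+1 := by push_cast; ring
    rw [cm, show (j:ℝ)+((m:ℝ)+1)+1 = (j:ℝ)+(m:ℝ)+2 from by ring,
      show (n:ℝ)+((m:ℝ)+1)+1+α = (n:ℝ)+(m:ℝ)+2+α from by ring]
    set a := (j:ℝ); set b := (n:ℝ); set x := (m:ℝ)
    have ha1 : 1 ≤ a := by simp only [a]; exact_mod_cast hj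
    have key1 : ((a+x+α)/(a+x+1)) ≤ ((a+x+1)/(a+x+2))^(1-α) := by
      have hX : (0:ℝ) < a+x+1 := by linarith
      have h := lem_down (by linarith : (0:ℝ) ≤ 1-α) hX
      rw [show a+x+1+1 = a+x+2 from by ring] at h
      have e : (a+x+α)/(a+x+1) = 1 - (1-α)/(a+x+1) := by
        field_simp
        ring
      rw [e]; exact h
    have key2 : ((b+x+1)/(b+x+1+α)) ≤ ((b+x+1+α)/(b+x+2+α))^α := by
      have hX : (0:ℝ) < b+x+1+α := by linarith
      have h := lem_down hα.le hX
      rw [show b+x+1+α+1 = b+x+2+α from by ring] at h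
      have e : (b+x+1)/(b+x+1+α) = 1 - α/(b+x+1+α) := by
        field_simp
        ring
      rw [e]; exact h
    have hP : ((a+1)/(a+x+1))^(1-α) * ((a+x+1)/(a+x+2))^(1-α) = ((a+1)/(a+x+2))^(1-α) := by
      rw [← Real.mul_rpow (by positivity) (by positivity)]
      congr 1
      rw [div_mul_div_comm]
      rw [mul_comm (a+1) (a+x+1), mul_div_mul_left _ _ (by positivity : (a+x+1) ≠ 0)]
    have hQ : ((b+1+α)/(b+x+1+α))^α * ((b+x+1+α)/(b+x+2+α))^α
        = ((b+1+α)/(b+x+2+α))^α := by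
      rw [← Real.mul_rpow (by positivity) (by positivity)]
      congr 1
      rw [div_mul_div_comm]
      rw [mul_comm (b+1+α) (b+x+1+α), mul_div_mul_left _ _ (by positivity : (b+x+1+α) ≠ 0)]
    have hg0 := gq_pos hα n j 0
    calc gq α n j (m+1)
        = gq α n j m * (((a+x+α)/(a+x+1)) * ((b+x+1)/(b+x+1+α))) := gq_succ hα n j m
      _ ≤ (gq α n j 0 * ((a+1)/(a+x+1))^(1-α) * ((b+1+α)/(b+x+1+α))^α) *
            (((a+x+α)/(a+x+1)) * ((b+x+1)/(b+x+1+α))) := by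
          apply mul_le_mul_of_nonneg_right ih (by positivity)
      _ ≤ (gq α n j 0 * ((a+1)/(a+x+1))^(1-α) * ((b+1+α)/(b+x+1+α))^α) *
            (((a+x+1)/(a+x+2))^(1-α) * ((b+x+1+α)/(b+x+2+α))^α) := by
          apply mul_le_mul_of_nonneg_left _ (by positivity)
          exact mul_le_mul key1 key2 (by positivity) (by positivity)
      _ = gq α n j 0 * (((a+1)/(a+x+1))^(1-α) * ((a+x+1)/(a+x+2))^(1-α)) *
            (((b+1+α)/(b+x+1+α))^α * ((b+x+1+α)/(b+x+2+α))^α) := by ring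
      _ = gq α n j 0 * ((a+1)/(a+x+2))^(1-α) * ((b+1+α)/(b+x+2+α))^α := by rw [hP, hQ]


lemma key_tail (α : ℝ) (hα : 0 < α) :
    ∃ K : ℝ, 1 ≤ K ∧ ∀ n j m : ℕ, n < j → j ≤ m →
      gq α n j m ≤ gq α n j 0 * (K * (j:ℝ) / (m:ℝ)) := by
  rcases le_or_gt 1 α with h1 | h1
  · refine ⟨max 1 ((2:ℝ)^(α-1) * (1+α)^α), le_max_left _ _, ?_⟩
    intro n j m hnj hjm
    have hj : 0 < j := lt_of_le_of_lt (Nat.zero_le n) hnj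
    have hj0 : (0:ℝ) < (j:ℝ) := by exact_mod_cast hj
    have ha1 : (1:ℝ) ≤ (j:ℝ) := by exact_mod_cast hj
    have hax : (j:ℝ) ≤ (m:ℝ) := by exact_mod_cast hjm
    have hb1 : (n:ℝ) + 1 ≤ (j:ℝ) := by exact_mod_cast hnj
    have hn0 : (0:ℝ) ≤ (n:ℝ) := Nat.cast_nonneg n
    set a := (j:ℝ); set b := (n:ℝ); set x := (m:ℝ)
    have hx0 : (0:ℝ) < x := lt_of_lt_of_le hj0 hax
    have hg0 := gq_pos hα n j 0
    have b1 : ((a+x)/a)^(α-1) ≤ (2*(x/a))^(α-1) := by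
      apply Real.rpow_le_rpow (by positivity) _ (by linarith)
      rw [show 2*(x/a) = (2*x)/a from by ring]
      exact (div_le_div_iff_of_pos_right hj0).2 (by linarith)
    have b2 : ((b+1+α)/(b+x+1+α))^α ≤ ((1+α)*(a/x))^α := by
      apply Real.rpow_le_rpow (by positivity) _ hα.le
      rw [show (1+α)*(a/x) = ((1+α)*a)/x from by ring]
      exact div_le_div₀ (by positivity) (by nlinarith) hx0 (by linarith)
    have hmerge : (a/x)^(1-α) * (a/x)^α = a/x := by
      rw [← Real.rpow_add (by positivity), show (1-α)+α = (1:ℝ) from by ring, Real.rpow_one]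
    have hinv : (x/a)^(α-1) = (a/x)^(1-α) := by
      rw [show x/a = (a/x)⁻¹ from by rw [inv_div],
        Real.inv_rpow (by positivity), ← Real.rpow_neg (by positivity),
        show -(α-1) = 1-α from by ring]
    have expand : (2*(x/a))^(α-1) * ((1+α)*(a/x))^α
        = ((2:ℝ)^(α-1) * (1+α)^α) * (a/x) := by
      rw [Real.mul_rpow (by norm_num) (by positivity),
          Real.mul_rpow (by positivity) (by positivity), hinv]
      linear_combination ((2:ℝ)^(α-1)*(1+α)^α) * hmerge
    calc gq α n j m ≤ gq α n j 0 * ((a+x)/a)^(α-1) * ((b+1+α)/(b+x+1+α))^α :=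
          decay_ge hα h1 hj m
      _ ≤ gq α n j 0 * (2*(x/a))^(α-1) * ((1+α)*(a/x))^α := by
          apply mul_le_mul (mul_le_mul_of_nonneg_left b1 hg0.le) b2 (by positivity)
            (by positivity)
      _ = gq α n j 0 * (((2:ℝ)^(α-1)*(1+α)^α) * (a/x)) := by rw [mul_assoc, expand]
      _ ≤ gq α n j 0 * ((max 1 ((2:ℝ)^(α-1) * (1+α)^α)) * a / x) := by
          apply mul_le_mul_of_nonneg_left _ hg0.le
          rw [mul_div_assoc]
          exact mul_le_mul_of_nonneg_right (le_max_right _ _) (by positivity)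
  · refine ⟨max 1 ((2:ℝ)^(1-α) * (1+α)^α), le_max_left _ _, ?_⟩
    intro n j m hnj hjm
    have hj : 0 < j := lt_of_le_of_lt (Nat.zero_le n) hnj
    have hj0 : (0:ℝ) < (j:ℝ) := by exact_mod_cast hj
    have ha1 : (1:ℝ) ≤ (j:ℝ) := by exact_mod_cast hj
    have hax : (j:ℝ) ≤ (m:ℝ) := by exact_mod_cast hjm
    have hb1 : (n:ℝ) + 1 ≤ (j:ℝ) := by exact_mod_cast hnj
    have hn0 : (0:ℝ) ≤ (n:ℝ) := Nat.cast_nonneg n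
    set a := (j:ℝ); set b := (n:ℝ); set x := (m:ℝ)
    have hx0 : (0:ℝ) < x := lt_of_lt_of_le hj0 hax
    have hg0 := gq_pos hα n j 0
    have b1 : ((a+1)/(a+x+1))^(1-α) ≤ (2*(a/x))^(1-α) := by
      apply Real.rpow_le_rpow (by positivity) _ (by linarith)
      rw [show 2*(a/x) = (2*a)/x from by ring]
      exact div_le_div₀ (by positivity) (by linarith) hx0 (by linarith)
    have b2 : ((b+1+α)/(b+x+1+α))^α ≤ ((1+α)*(a/x))^α := by
      apply Real.rpow_le_rpow (by positivity) _ hα.le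
      rw [show (1+α)*(a/x) = ((1+α)*a)/x from by ring]
      exact div_le_div₀ (by positivity) (by nlinarith) hx0 (by linarith)
    have hmerge : (a/x)^(1-α) * (a/x)^α = a/x := by
      rw [← Real.rpow_add (by positivity), show (1-α)+α = (1:ℝ) from by ring, Real.rpow_one]
    have expand : (2*(a/x))^(1-α) * ((1+α)*(a/x))^α
        = ((2:ℝ)^(1-α) * (1+α)^α) * (a/x) := by
      rw [Real.mul_rpow (by norm_num) (by positivity),
          Real.mul_rpow (by positivity) (by positivity)]
      linear_combination ((2:ℝ)^(1-α)*(1+α)^α) * hmerge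
    calc gq α n j m ≤ gq α n j 0 * ((a+1)/(a+x+1))^(1-α) * ((b+1+α)/(b+x+1+α))^α :=
          decay_lt hα h1 hj m
      _ ≤ gq α n j 0 * (2*(a/x))^(1-α) * ((1+α)*(a/x))^α := by
          apply mul_le_mul (mul_le_mul_of_nonneg_left b1 hg0.le) b2 (by positivity)
            (by positivity)
      _ = gq α n j 0 * (((2:ℝ)^(1-α)*(1+α)^α) * (a/x)) := by rw [mul_assoc, expand]
      _ ≤ gq α n j 0 * ((max 1 ((2:ℝ)^(1-α) * (1+α)^α)) * a / x) := by
          apply mul_le_mul_of_nonneg_left _ hg0.le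
          rw [mul_div_assoc]
          exact mul_le_mul_of_nonneg_right (le_max_right _ _) (by positivity)

lemma tele {q : ℝ} (hq : 1 < q) {i : ℕ} (hi : 1 ≤ i) :
    1/((i:ℝ)+1)^q ≤ ((i:ℝ)^(1-q) - ((i:ℝ)+1)^(1-q))/(q-1) := by
  have ha1 : (1:ℝ) ≤ (i:ℝ) := by exact_mod_cast hi
  set a := (i:ℝ)
  have ha0 : (0:ℝ) < a := by linarith
  have ha10 : (0:ℝ) < a + 1 := by linarith
  have hq1 : (0:ℝ) < q - 1 := by linarith
  rw [div_le_div_iff₀ (by positivity) hq1]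
  have e1 : (a+1)^(1-q)*(a+1)^q = a+1 := by
    rw [← Real.rpow_add ha10, show (1-q)+q = (1:ℝ) from by ring, Real.rpow_one]
  have e2 : a^(1-q)*(a+1)^q = a*((1+1/a)^q) := by
    rw [show (1:ℝ)+1/a = (a+1)/a from by field_simp,
      Real.div_rpow ha10.le ha0.le,
      show (1:ℝ)-q = 1+(-q) from by ring, Real.rpow_add ha0, Real.rpow_one,
      Real.rpow_neg ha0.le]
    field_simp
  have h1a : (0:ℝ) ≤ 1/a := by positivity
  have bern : 1 + q*(1/a) ≤ (1+1/a)^q :=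
    one_add_mul_self_le_rpow_one_add (by linarith) hq.le
  have : a*(1 + q*(1/a)) ≤ a*((1+1/a)^q) := mul_le_mul_of_nonneg_left bern ha0.le
  have ea : a*(1 + q*(1/a)) = a + q := by field_simp
  calc 1*(q-1) = (a + q) - (a+1) := by ring
    _ ≤ a*((1+1/a)^q) - (a+1) := by linarith [ea ▸ this]
    _ = (a^(1-q) - (a+1)^(1-q))*((a+1)^q) := by rw [sub_mul, e1, e2]
end Stmt7Aux

open Stmt7Aux in
/-- Lemma 2.2: tail estimate for quotients of Cesàro kernels. -/
theorem stmt7 (α q : ℝ) (hα : 0 < α) (hq : 1 < q) :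
    ∃ C : ℝ, 0 < C ∧ ∀ n j : ℕ, n < j →
      ∑' m : ℕ, (cesK α (j + 1 + m) / cesK (α + 1) (n + 1 + m)) ^ q
        ≤ C * j * (cesK α j / cesK (α + 1) n) ^ q := by
  obtain ⟨K, hK1, hK⟩ := key_tail α hα
  have hq0 : (0:ℝ) ≤ q := by linarith
  have hq1 : (0:ℝ) < q - 1 := by linarith
  have hKpos : (0:ℝ) < K := by linarith
  refine ⟨1 + K^q/(q-1), by positivity, ?_⟩
  intro n j hnj
  have hj : 0 < j := lt_of_le_of_lt (Nat.zero_le n) hnj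
  have hj0 : (0:ℝ) < (j:ℝ) := by exact_mod_cast hj
  have hj1 : (1:ℝ) ≤ (j:ℝ) := by exact_mod_cast hj
  have hterm : ∀ m : ℕ, (cesK α (j+1+m) / cesK (α+1) (n+1+m))^q = (gq α n j (m+1))^q := by
    intro m
    unfold gq
    rw [show j+(m+1) = j+1+m from by omega, show n+(m+1) = n+1+m from by omega]
  rw [tsum_congr hterm, show cesK α j / cesK (α+1) n = gq α n j 0 from rfl]
  have hg0 : 0 < gq α n j 0 := gq_pos hα n j 0
  set g0 := gq α n j 0 with hg0def
  have hg0q : (0:ℝ) < g0^q := Real.rpow_pos_of_pos hg0 q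
  apply Real.tsum_le_of_sum_range_le
  · intro m
    exact Real.rpow_nonneg (gq_pos hα n j (m+1)).le q
  · intro N
    have head : ∀ i : ℕ, (gq α n j (i+1))^q ≤ g0^q := fun i =>
      Real.rpow_le_rpow (gq_pos hα n j (i+1)).le (gq_le_head hα hnj.le (i+1)) hq0
    have headsum : ∀ M : ℕ, (M:ℝ) ≤ (j:ℝ) →
        ∑ i ∈ range M, (gq α n j (i+1))^q ≤ (j:ℝ) * g0^q := by
      intro M hM
      calc ∑ i ∈ range M, (gq α n j (i+1))^q ≤ ∑ i ∈ range M, g0^q :=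
            Finset.sum_le_sum fun i _ => head i
        _ = (M:ℝ) * g0^q := by rw [Finset.sum_const, Finset.card_range]; ring
        _ ≤ (j:ℝ) * g0^q := mul_le_mul_of_nonneg_right hM hg0q.le
    rcases le_or_gt N j with hN | hN
    · have h := headsum N (by exact_mod_cast hN)
      have hx : (0:ℝ) ≤ K^q/(q-1) * ((j:ℝ) * g0^q) :=
        mul_nonneg (div_nonneg (Real.rpow_pos_of_pos hKpos q).le hq1.le)
          (mul_nonneg hj0.le hg0q.le)
      nlinarith
    · rw [range_eq_Ico, ← Finset.sum_Ico_consecutive _ (Nat.zero_le j) hN.le]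
      have part1 : ∑ i ∈ Ico 0 j, (gq α n j (i+1))^q ≤ (j:ℝ) * g0^q := by
        rw [← range_eq_Ico]; exact headsum j le_rfl
      set φ : ℕ → ℝ := fun i => (i:ℝ)^(1-q) with hφ
      have part2 : ∑ i ∈ Ico j N, (gq α n j (i+1))^q
          ≤ (g0^q * K^q * (j:ℝ)^q / (q-1)) * ((j:ℝ)^(1-q) - (N:ℝ)^(1-q)) := by
        have hD : (0:ℝ) ≤ g0^q * K^q * (j:ℝ)^q / (q-1) := by positivity
        have hbound : ∀ i ∈ Ico j N, (gq α n j (i+1))^q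
            ≤ (g0^q * K^q * (j:ℝ)^q / (q-1)) * (φ i - φ (i+1)) := by
          intro i hi
          have hji : j ≤ i := (Finset.mem_Ico.1 hi).1
          have hi1 : (1:ℝ) ≤ (i:ℝ) := le_trans hj1 (by exact_mod_cast hji)
          have hi0 : (0:ℝ) < (i:ℝ) + 1 := by linarith
          have t1 : gq α n j (i+1) ≤ g0 * (K * (j:ℝ) / ((i:ℝ)+1)) := by
            have h := hK n j (i+1) hnj (le_trans hji (Nat.le_succ i))
            have : (((i+1:ℕ)):ℝ) = (i:ℝ)+1 := by push_cast; ring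
            rwa [this] at h
          have t2 : (gq α n j (i+1))^q ≤ (g0 * (K * (j:ℝ) / ((i:ℝ)+1)))^q :=
            Real.rpow_le_rpow (gq_pos hα n j (i+1)).le t1 hq0
          have t3 : (g0 * (K * (j:ℝ) / ((i:ℝ)+1)))^q
              = g0^q * K^q * (j:ℝ)^q * (1/((i:ℝ)+1)^q) := by
            rw [Real.mul_rpow hg0.le (by positivity),
                Real.div_rpow (by positivity) hi0.le,
                Real.mul_rpow hKpos.le hj0.le]
            ring
          have t4 := tele hq (by exact_mod_cast hi1 : 1 ≤ i)
          have hfac : (0:ℝ) ≤ g0^q * K^q * (j:ℝ)^q := by positivity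
          calc (gq α n j (i+1))^q ≤ g0^q * K^q * (j:ℝ)^q * (1/((i:ℝ)+1)^q) := by
                rw [← t3]; exact t2
            _ ≤ g0^q * K^q * (j:ℝ)^q * ((φ i - φ (i+1))/(q-1)) := by
                apply mul_le_mul_of_nonneg_left _ hfac
                have : φ (i+1) = ((i:ℝ)+1)^(1-q) := by simp only [hφ]; push_cast; rfl
                rw [this]
                exact t4
            _ = (g0^q * K^q * (j:ℝ)^q / (q-1)) * (φ i - φ (i+1)) := by ring
        calc ∑ i ∈ Ico j N, (gq α n j (i+1))^q
            ≤ ∑ i ∈ Ico j N, (g0^q * K^q * (j:ℝ)^q / (q-1)) * (φ i - φ (i+1)) :=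
              Finset.sum_le_sum hbound
          _ = (g0^q * K^q * (j:ℝ)^q / (q-1)) * ∑ i ∈ Ico j N, (φ i - φ (i+1)) := by
              rw [Finset.mul_sum]
          _ = (g0^q * K^q * (j:ℝ)^q / (q-1)) * (φ j - φ N) := by
              rw [Finset.sum_Ico_eq_sub _ hN.le, Finset.sum_range_sub' φ,
                Finset.sum_range_sub' φ]
              ring
          _ = (g0^q * K^q * (j:ℝ)^q / (q-1)) * ((j:ℝ)^(1-q) - (N:ℝ)^(1-q)) := rfl
      have hNφ : (0:ℝ) ≤ (N:ℝ)^(1-q) := Real.rpow_nonneg (Nat.cast_nonneg N) _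
      have hjj : (j:ℝ)^q * (j:ℝ)^(1-q) = (j:ℝ) := by
        rw [← Real.rpow_add hj0, show q+(1-q) = (1:ℝ) from by ring, Real.rpow_one]
      have part2' : ∑ i ∈ Ico j N, (gq α n j (i+1))^q ≤ K^q/(q-1) * (j:ℝ) * g0^q := by
        calc ∑ i ∈ Ico j N, (gq α n j (i+1))^q
            ≤ (g0^q * K^q * (j:ℝ)^q / (q-1)) * ((j:ℝ)^(1-q) - (N:ℝ)^(1-q)) := part2
          _ ≤ (g0^q * K^q * (j:ℝ)^q / (q-1)) * (j:ℝ)^(1-q) := by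
              apply mul_le_mul_of_nonneg_left _ (by positivity)
              linarith
          _ = K^q/(q-1) * ((j:ℝ)^q * (j:ℝ)^(1-q)) * g0^q := by ring
          _ = K^q/(q-1) * (j:ℝ) * g0^q := by rw [hjj]
      calc ∑ i ∈ Ico 0 j, (gq α n j (i+1))^q + ∑ i ∈ Ico j N, (gq α n j (i+1))^q
          ≤ (j:ℝ) * g0^q + K^q/(q-1) * (j:ℝ) * g0^q := add_le_add part1 part2'
        _ = (1 + K^q/(q-1)) * (j:ℝ) * g0^q := by ring
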